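/- If the layer partition {K_s(l)} is equitable with parameters c_{l,n}, and each node's state at time 0 depends only on its layer, then the exact solution of the full N-dimensional reduced-type system dx_i/dt = -B₁x_i + Σ_{j∼i} h(y_j), dy_i/dt = -B₂y_i + Σ_{j∼i} h(x_j) remains constant within each layer for all time, i.e., x_i(t) = X_l(t) for all i ∈ K_s(l), where (X_l, Y_l) solves the reduced system dX_l/dt = -B₁X_l + Σ_{n=-1}^{1} c_{l,n} h(Y_{l+n}), dY_l/dt = -B₂Y_l + Σ_{n=-1}^{1} c_{l,n} h(X_{l+n}). -/

import Mathlib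

open Finset

private lemma hasDerivAt_pi_of {ι : Type*} [Fintype ι] {f : ℝ → ι → ℝ} {f' : ι → ℝ} {t : ℝ}
    (h : ∀ i, HasDerivAt (fun τ => f τ i) (f' i) t) : HasDerivAt f f' t := by
  rw [hasDerivAt_iff_hasFDerivAt]
  apply hasFDerivAt_pi'.2
  intro i
  have hi := (h i).hasFDerivAt
  exact hi

/-- Sum of a layer-function over the neighborhood of `v` collapses to three terms. -/
private lemma sum_layer {V : Type*} [Fintype V] [DecidableEq V] (G : SimpleGraph V)
    [DecidableRel G.Adj] (hconn : G.Connected) (s v : V) (g : ℕ → ℝ) :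
    ∑ w ∈ G.neighborFinset v, g (G.dist s w)
      = (((G.neighborFinset v).filter
          (fun w => G.dist s w = G.dist s v - 1)).card : ℝ) * g (G.dist s v - 1)
      + (((G.neighborFinset v).filter
          (fun w => G.dist s w = G.dist s v)).card : ℝ) * g (G.dist s v)
      + (((G.neighborFinset v).filter
          (fun w => G.dist s w = G.dist s v + 1)).card : ℝ) * g (G.dist s v + 1) := by
  set l := G.dist s v with hl
  set N := G.neighborFinset v with hN
  have hfacts : ∀ w ∈ N, G.dist s w ≤ l + 1 ∧ l ≤ G.dist s w + 1 ∧ (l = 0 → G.dist s w ≠ 0) := by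
    intro w hw
    rw [hN, SimpleGraph.mem_neighborFinset] at hw
    have hvw : G.dist v w = 1 := SimpleGraph.dist_eq_one_iff_adj.2 hw
    have hwv : G.dist w v = 1 := SimpleGraph.dist_eq_one_iff_adj.2 hw.symm
    refine ⟨?_, ?_, ?_⟩
    · have := hconn.dist_triangle (u := s) (v := v) (w := w)
      omega
    · have := hconn.dist_triangle (u := s) (v := w) (w := v)
      omega
    · intro h0 hw0
      have hv0 : s = v := (hconn.dist_eq_zero_iff).1 (by omega)
      have hw0' : s = w := (hconn.dist_eq_zero_iff).1 hw0
      apply G.loopless.irrefl s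
      have hadj : G.Adj s w := by rwa [← hv0] at hw
      rwa [← hw0'] at hadj
  rw [← Finset.sum_filter_add_sum_filter_not N (fun w => G.dist s w = l + 1)]
  have h1 : ∑ w ∈ N.filter (fun w => G.dist s w = l + 1), g (G.dist s w)
      = ((N.filter (fun w => G.dist s w = l + 1)).card : ℝ) * g (l + 1) := by
    rw [Finset.sum_congr rfl (fun w hw => by
      rw [(Finset.mem_filter.1 hw).2]), Finset.sum_const, nsmul_eq_mul]
  rw [← Finset.sum_filter_add_sum_filter_not (N.filter (fun w => ¬G.dist s w = l + 1))
    (fun w => G.dist s w = l)]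
  have h2s : (N.filter (fun w => ¬G.dist s w = l + 1)).filter (fun w => G.dist s w = l)
      = N.filter (fun w => G.dist s w = l) := by
    rw [Finset.filter_filter]
    apply Finset.filter_congr
    intro w hw
    obtain ⟨h1', h2', h3'⟩ := hfacts w hw
    omega
  have h3s : (N.filter (fun w => ¬G.dist s w = l + 1)).filter (fun w => ¬G.dist s w = l)
      = N.filter (fun w => G.dist s w = l - 1) := by
    rw [Finset.filter_filter]
    apply Finset.filter_congr
    intro w hw
    obtain ⟨h1', h2', h3'⟩ := hfacts w hw
    omega
  rw [h2s, h3s]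
  have h2 : ∑ w ∈ N.filter (fun w => G.dist s w = l), g (G.dist s w)
      = ((N.filter (fun w => G.dist s w = l)).card : ℝ) * g l := by
    rw [Finset.sum_congr rfl (fun w hw => by
      rw [(Finset.mem_filter.1 hw).2]), Finset.sum_const, nsmul_eq_mul]
  have h3 : ∑ w ∈ N.filter (fun w => G.dist s w = l - 1), g (G.dist s w)
      = ((N.filter (fun w => G.dist s w = l - 1)).card : ℝ) * g (l - 1) := by
    rw [Finset.sum_congr rfl (fun w hw => by
      rw [(Finset.mem_filter.1 hw).2]), Finset.sum_const, nsmul_eq_mul]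
  rw [h1, h2, h3]
  ring

theorem stmt13 {V : Type*} [Fintype V] [DecidableEq V] (G : SimpleGraph V)
    [DecidableRel G.Adj] (hconn : G.Connected) (s : V)
    (h : ℝ → ℝ) (Kh : NNReal) (hLip : LipschitzWith Kh h)
    (B₁ B₂ : ℝ)
    (cm c0 cp : ℕ → ℕ)
    -- equitable partition: exact neighbor counts into layers l-1, l, l+1
    (hcm : ∀ v : V, ((G.neighborFinset v).filter
      (fun w => G.dist s w = G.dist s v - 1)).card = cm (G.dist s v))
    (hc0 : ∀ v : V, ((G.neighborFinset v).filter
      (fun w => G.dist s w = G.dist s v)).card = c0 (G.dist s v))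
    (hcp : ∀ v : V, ((G.neighborFinset v).filter
      (fun w => G.dist s w = G.dist s v + 1)).card = cp (G.dist s v))
    (hdeg : ∀ v : V, cm (G.dist s v) + c0 (G.dist s v) + cp (G.dist s v) = G.degree v)
    -- full system
    (x y : ℝ → V → ℝ)
    (hx : ∀ v t, HasDerivAt (fun τ => x τ v)
      (-B₁ * x t v + ∑ w ∈ G.neighborFinset v, h (y t w)) t)
    (hy : ∀ v t, HasDerivAt (fun τ => y τ v)
      (-B₂ * y t v + ∑ w ∈ G.neighborFinset v, h (x t w)) t)
    -- reduced system
    (X Y : ℝ → ℕ → ℝ)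
    (hX : ∀ l t, HasDerivAt (fun τ => X τ l)
      (-B₁ * X t l + (cm l : ℝ) * h (Y t (l - 1)) + (c0 l : ℝ) * h (Y t l)
        + (cp l : ℝ) * h (Y t (l + 1))) t)
    (hY : ∀ l t, HasDerivAt (fun τ => Y τ l)
      (-B₂ * Y t l + (cm l : ℝ) * h (X t (l - 1)) + (c0 l : ℝ) * h (X t l)
        + (cp l : ℝ) * h (X t (l + 1))) t)
    -- layer-constant initial data
    (hx0 : ∀ v : V, x 0 v = X 0 (G.dist s v))
    (hy0 : ∀ v : V, y 0 v = Y 0 (G.dist s v)) :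
    ∀ t : ℝ, ∀ v : V, x t v = X t (G.dist s v) ∧ y t v = Y t (G.dist s v) := by
  classical
  set F : ((V → ℝ) × (V → ℝ)) → ((V → ℝ) × (V → ℝ)) := fun p =>
    (fun v => -B₁ * p.1 v + ∑ w ∈ G.neighborFinset v, h (p.2 w),
     fun v => -B₂ * p.2 v + ∑ w ∈ G.neighborFinset v, h (p.1 w)) with hFdef
  set K : NNReal := ‖B₁‖₊ + ‖B₂‖₊ + (Fintype.card V : NNReal) * Kh with hKdef
  have hKcoe : (K : ℝ) = |B₁| + |B₂| + (Fintype.card V : ℝ) * (Kh : ℝ) := by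
    simp [hKdef, Real.norm_eq_abs, NNReal.coe_add, NNReal.coe_mul]
  -- Lipschitz estimate for F
  have hFLip : LipschitzWith K F := by
    rw [lipschitzWith_iff_dist_le_mul]
    intro p q
    set D := dist p q with hD
    have hD0 : 0 ≤ D := dist_nonneg
    have hKD0 : 0 ≤ (K : ℝ) * D := mul_nonneg K.coe_nonneg hD0
    have hd1 : ∀ v, dist (p.1 v) (q.1 v) ≤ D := fun v =>
      (dist_le_pi_dist p.1 q.1 v).trans (by rw [hD, Prod.dist_eq]; exact le_max_left _ _)
    have hd2 : ∀ v, dist (p.2 v) (q.2 v) ≤ D := fun v =>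
      (dist_le_pi_dist p.2 q.2 v).trans (by rw [hD, Prod.dist_eq]; exact le_max_right _ _)
    have hcardle : ∀ v : V, ((G.neighborFinset v).card : ℝ) ≤ (Fintype.card V : ℝ) := by
      intro v
      exact_mod_cast Finset.card_le_card (Finset.subset_univ _)
    have key : ∀ (B : ℝ) (a b : V → ℝ) (c d : V → ℝ), (∀ v, dist (a v) (b v) ≤ D) →
        (∀ v, dist (c v) (d v) ≤ D) → |B| ≤ |B₁| + |B₂| →
        dist (fun v => -B * a v + ∑ w ∈ G.neighborFinset v, h (c w))
             (fun v => -B * b v + ∑ w ∈ G.neighborFinset v, h (d w)) ≤ K * D := by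
      intro B a b c d hab hcd hB
      rw [dist_pi_le_iff hKD0]
      intro v
      rw [Real.dist_eq]
      have e1 : (-B * a v + ∑ w ∈ G.neighborFinset v, h (c w))
          - (-B * b v + ∑ w ∈ G.neighborFinset v, h (d w))
          = -B * (a v - b v) + ∑ w ∈ G.neighborFinset v, (h (c w) - h (d w)) := by
        rw [Finset.sum_sub_distrib]; ring
      rw [e1]
      have t1 : |(-B) * (a v - b v)| ≤ (|B₁| + |B₂|) * D := by
        rw [abs_mul, abs_neg]
        have := hab v
        rw [Real.dist_eq] at this
        exact mul_le_mul hB this (abs_nonneg _) (by positivity)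
      have t2 : |∑ w ∈ G.neighborFinset v, (h (c w) - h (d w))|
          ≤ (Fintype.card V : ℝ) * (Kh : ℝ) * D := by
        calc |∑ w ∈ G.neighborFinset v, (h (c w) - h (d w))|
            ≤ ∑ w ∈ G.neighborFinset v, |h (c w) - h (d w)| := Finset.abs_sum_le_sum_abs _ _
          _ ≤ ∑ w ∈ G.neighborFinset v, (Kh : ℝ) * D := by
              apply Finset.sum_le_sum
              intro w _
              have h1 : dist (h (c w)) (h (d w)) ≤ (Kh : ℝ) * dist (c w) (d w) :=
                hLip.dist_le_mul _ _
              rw [Real.dist_eq] at h1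
              refine h1.trans ?_
              exact mul_le_mul_of_nonneg_left (hcd w) Kh.coe_nonneg
          _ = ((G.neighborFinset v).card : ℝ) * ((Kh : ℝ) * D) := by
              rw [Finset.sum_const, nsmul_eq_mul]
          _ ≤ (Fintype.card V : ℝ) * ((Kh : ℝ) * D) := by
              exact mul_le_mul_of_nonneg_right (hcardle v) (by positivity)
          _ = (Fintype.card V : ℝ) * (Kh : ℝ) * D := by ring
      calc |(-B) * (a v - b v) + ∑ w ∈ G.neighborFinset v, (h (c w) - h (d w))|
          ≤ |(-B) * (a v - b v)| + |∑ w ∈ G.neighborFinset v, (h (c w) - h (d w))| :=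
            abs_add_le _ _
        _ ≤ (|B₁| + |B₂|) * D + (Fintype.card V : ℝ) * (Kh : ℝ) * D := add_le_add t1 t2
        _ = ((|B₁| + |B₂|) + (Fintype.card V : ℝ) * (Kh : ℝ)) * D := by ring
        _ = (K : ℝ) * D := by rw [hKcoe]
    rw [Prod.dist_eq]
    apply max_le
    · exact key B₁ p.1 q.1 p.2 q.2 hd1 hd2 (by linarith [abs_nonneg B₂])
    · exact key B₂ p.2 q.2 p.1 q.1 hd2 hd1 (by linarith [abs_nonneg B₁])
  -- the two trajectories
  set f : ℝ → ((V → ℝ) × (V → ℝ)) := fun τ => (fun v => x τ v, fun v => y τ v) with hfdef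
  set g : ℝ → ((V → ℝ) × (V → ℝ)) :=
    fun τ => (fun v => X τ (G.dist s v), fun v => Y τ (G.dist s v)) with hgdef
  have hf' : ∀ t, HasDerivAt f (F (f t)) t := by
    intro t
    exact (hasDerivAt_pi_of (fun v => hx v t)).prodMk (hasDerivAt_pi_of (fun v => hy v t))
  have hg' : ∀ t, HasDerivAt g (F (g t)) t := by
    intro t
    apply HasDerivAt.prodMk
    · apply hasDerivAt_pi_of
      intro v
      show HasDerivAt (fun τ => X τ (G.dist s v))
        (-B₁ * X t (G.dist s v) + ∑ w ∈ G.neighborFinset v, h (Y t (G.dist s w))) t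
      have hs : ∑ w ∈ G.neighborFinset v, h (Y t (G.dist s w))
          = (cm (G.dist s v) : ℝ) * h (Y t (G.dist s v - 1))
          + (c0 (G.dist s v) : ℝ) * h (Y t (G.dist s v))
          + (cp (G.dist s v) : ℝ) * h (Y t (G.dist s v + 1)) := by
        rw [sum_layer G hconn s v (fun n => h (Y t n)), hcm v, hc0 v, hcp v]
      rw [hs]
      convert hX (G.dist s v) t using 1
      ring
    · apply hasDerivAt_pi_of
      intro v
      show HasDerivAt (fun τ => Y τ (G.dist s v))
        (-B₂ * Y t (G.dist s v) + ∑ w ∈ G.neighborFinset v, h (X t (G.dist s w))) t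
      have hs : ∑ w ∈ G.neighborFinset v, h (X t (G.dist s w))
          = (cm (G.dist s v) : ℝ) * h (X t (G.dist s v - 1))
          + (c0 (G.dist s v) : ℝ) * h (X t (G.dist s v))
          + (cp (G.dist s v) : ℝ) * h (X t (G.dist s v + 1)) := by
        rw [sum_layer G hconn s v (fun n => h (X t n)), hcm v, hc0 v, hcp v]
      rw [hs]
      convert hY (G.dist s v) t using 1
      ring
  have heq0 : f 0 = g 0 := by
    rw [hfdef, hgdef]
    dsimp only
    exact Prod.ext (funext fun v => hx0 v) (funext fun v => hy0 v)
  intro t v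
  have ht : t ∈ Set.Ioo (-(|t| + 1)) (|t| + 1) := by
    constructor <;> [linarith [neg_abs_le t]; linarith [le_abs_self t]]
  have h0 : (0 : ℝ) ∈ Set.Ioo (-(|t| + 1)) (|t| + 1) := by
    constructor
    · linarith [abs_nonneg t]
    · linarith [abs_nonneg t]
  have huniq : Set.EqOn f g (Set.Ioo (-(|t| + 1)) (|t| + 1)) := by
    apply ODE_solution_unique_of_mem_Ioo (v := fun _ p => F p) (s := fun _ => Set.univ)
      (K := K) (fun _ _ => hFLip.lipschitzOnWith) h0
      (fun τ _ => ⟨hf' τ, Set.mem_univ _⟩) (fun τ _ => ⟨hg' τ, Set.mem_univ _⟩) heq0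
  have hft : f t = g t := huniq ht
  constructor
  · exact congrFun (congrArg Prod.fst hft) v
  · exact congrFun (congrArg Prod.snd hft) v
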